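/- Let L, M, N be positive integers and let g_0, …, g_{L−1} and h_0, …, h_{L−1} be real-valued elements of ℓ²(ℤ²,ℍ). Then for all finitely supported f, φ : ℤ×ℤ → ℍ: ∑_{l=0}^{L−1} ∑_{n∈ℤ²} ∑_{m∈{0,…,M−1}²} ⟨f, E_{m/M}T_{nN}g_l⟩·⟨E_{m/M}T_{nN}h_l, φ⟩ = M² ∑_{k∈ℤ²} ∑_{p∈ℤ²} ( ∑_{l=0}^{L−1} ∑_{n∈ℤ²} g_l(k−nN)·h_l(k+pM−nN) )·conj(f(k))·φ(k+pM), where nN := (n₁N,n₂N) and pM := (p₁M,p₂M). -/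

import Mathlib

noncomputable section

open scoped Real

/-- The real quaternions. -/
abbrev ℍ : Type := Quaternion ℝ

/-- `e_i θ = cos θ + (sin θ) i`. -/
def eI (θ : ℝ) : ℍ := ⟨Real.cos θ, Real.sin θ, 0, 0⟩

/-- `e_j θ = cos θ + (sin θ) j`. -/
def eJ (θ : ℝ) : ℍ := ⟨Real.cos θ, 0, Real.sin θ, 0⟩

/-- Quaternionic pairing `⟨f,g⟩ = ∑ conj (f k) * g k`. -/
def qpair (f g : ℤ × ℤ → ℍ) : ℍ := ∑' k : ℤ × ℤ, star (f k) * g k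

/-- Membership in `ℓ²(ℤ², ℍ)`. -/
def MemL2 (f : ℤ × ℤ → ℍ) : Prop := Summable fun k : ℤ × ℤ => ‖f k‖ ^ 2

/-- `‖f‖² = ∑ |f k|²`. -/
def normSq2 (f : ℤ × ℤ → ℍ) : ℝ := ∑' k : ℤ × ℤ, ‖f k‖ ^ 2

/-- A window is real-valued if all its values lie in `ℝ ⊆ ℍ`. -/
def IsRealValued (f : ℤ × ℤ → ℍ) : Prop := ∀ k : ℤ × ℤ, f k = ((f k).re : ℍ)

/-- The Gabor atom `E_{m/M} T_{nN} w`. -/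
def gaborAtom (M N : ℕ) (w : ℤ × ℤ → ℍ) (m : ℕ × ℕ) (n : ℤ × ℤ) : ℤ × ℤ → ℍ :=
  fun k =>
    eI (2 * π * (m.1 : ℝ) * (k.1 : ℝ) / (M : ℝ)) *
      w (k.1 - n.1 * (N : ℤ), k.2 - n.2 * (N : ℤ)) *
      eJ (2 * π * (m.2 : ℝ) * (k.2 : ℝ) / (M : ℝ))

/-- The index square `{0, …, M-1}²`. -/
abbrev msq (M : ℕ) : Finset (ℕ × ℕ) := Finset.range M ×ˢ Finset.range M

/-- `k ∈ {0, …, N-1}²` inside `ℤ²`. -/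
def InNsq (N : ℕ) (k : ℤ × ℤ) : Prop :=
  0 ≤ k.1 ∧ k.1 < (N : ℤ) ∧ 0 ≤ k.2 ∧ k.2 < (N : ℤ)

/-- `∑_{l<L} ∑_{n∈ℤ²} ∑_{m∈{0,…,M-1}²} |⟨E_{m/M}T_{nN}g_l, h⟩|²`. -/
def frameSum (L M N : ℕ) (g : ℕ → ℤ × ℤ → ℍ) (h : ℤ × ℤ → ℍ) : ℝ :=
  ∑ l ∈ Finset.range L, ∑' n : ℤ × ℤ, ∑ m ∈ msq M,
    ‖qpair (gaborAtom M N (g l) m n) h‖ ^ 2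

/-- Bessel system with bound `B`. -/
def IsBessel (L M N : ℕ) (g : ℕ → ℤ × ℤ → ℍ) (B : ℝ) : Prop :=
  ∀ h : ℤ × ℤ → ℍ, MemL2 h → frameSum L M N g h ≤ B * normSq2 h

/-- Frame with bounds `A ≤ B`. -/
def IsFrame (L M N : ℕ) (g : ℕ → ℤ × ℤ → ℍ) (A B : ℝ) : Prop :=
  ∀ h : ℤ × ℤ → ℍ, MemL2 h →
    A * normSq2 h ≤ frameSum L M N g h ∧ frameSum L M N g h ≤ B * normSq2 h

/-- Parseval frame. -/
def IsParseval (L M N : ℕ) (g : ℕ → ℤ × ℤ → ℍ) : Prop :=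
  ∀ h : ℤ × ℤ → ℍ, MemL2 h → frameSum L M N g h = normSq2 h

/-- Orthonormal system. -/
def IsON (L M N : ℕ) (g : ℕ → ℤ × ℤ → ℍ) : Prop :=
  ∀ l l' : ℕ, l < L → l' < L → ∀ m ∈ msq M, ∀ m' ∈ msq M, ∀ n n' : ℤ × ℤ,
    qpair (gaborAtom M N (g l) m n) (gaborAtom M N (g l') m' n') =
      if l = l' ∧ m = m' ∧ n = n' then 1 else 0

/-- `G(k,p) = ∑_{l<L} ∑_{n∈ℤ²} g_l(k-nN) g_l(k+pM-nN)`. -/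
def gaborG (L M N : ℕ) (g : ℕ → ℤ × ℤ → ℍ) (k p : ℤ × ℤ) : ℍ :=
  ∑ l ∈ Finset.range L, ∑' n : ℤ × ℤ,
    g l (k.1 - n.1 * (N : ℤ), k.2 - n.2 * (N : ℤ)) *
      g l (k.1 + p.1 * (M : ℤ) - n.1 * (N : ℤ), k.2 + p.2 * (M : ℤ) - n.2 * (N : ℤ))

/-- Mixed version: `∑_{l<L} ∑_{n∈ℤ²} g_l(k-nN) h_l(k+pM-nN)`. -/
def gaborGmix (L M N : ℕ) (g h : ℕ → ℤ × ℤ → ℍ) (k p : ℤ × ℤ) : ℍ :=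
  ∑ l ∈ Finset.range L, ∑' n : ℤ × ℤ,
    g l (k.1 - n.1 * (N : ℤ), k.2 - n.2 * (N : ℤ)) *
      h l (k.1 + p.1 * (M : ℤ) - n.1 * (N : ℤ), k.2 + p.2 * (M : ℤ) - n.2 * (N : ℤ))

/-- `∑_{l<L} ∑_{n∈ℤ²} |g_l(k-nN)|²`. -/
def winSum (L N : ℕ) (g : ℕ → ℤ × ℤ → ℍ) (k : ℤ × ℤ) : ℝ :=
  ∑ l ∈ Finset.range L, ∑' n : ℤ × ℤ,
    ‖g l (k.1 - n.1 * (N : ℤ), k.2 - n.2 * (N : ℤ))‖ ^ 2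

/-- Support of diameter `< M` in every row and every column. -/
def DiamLt (M : ℕ) (f : ℤ × ℤ → ℍ) : Prop :=
  (∀ k₂ k₁ k₁' : ℤ, f (k₁, k₂) ≠ 0 → f (k₁', k₂) ≠ 0 → |k₁ - k₁'| < (M : ℤ)) ∧
  (∀ k₁ k₂ k₂' : ℤ, f (k₁, k₂) ≠ 0 → f (k₁, k₂') ≠ 0 → |k₂ - k₂'| < (M : ℤ))

/-- `M`-periodicity. -/
def MPeriodic (M : ℕ) (f : ℤ × ℤ → ℍ) : Prop :=
  ∀ k : ℤ × ℤ, f (k.1 + (M : ℤ), k.2) = f k ∧ f (k.1, k.2 + (M : ℤ)) = f k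

/-- Duality of two Gabor systems (on finitely supported sequences). -/
def AreDual (L M N : ℕ) (g h : ℕ → ℤ × ℤ → ℍ) : Prop :=
  ∀ f φ : ℤ × ℤ → ℍ, (Function.support f).Finite → (Function.support φ).Finite →
    (∑ l ∈ Finset.range L, ∑' n : ℤ × ℤ, ∑ m ∈ msq M,
      qpair f (gaborAtom M N (g l) m n) * qpair (gaborAtom M N (h l) m n) φ)
      = qpair f φ

namespace Stmt16Aux

open scoped Real

lemma sum_exp (M : ℕ) (hM : 0 < M) (d : ℤ) :
    ∑ m ∈ Finset.range M, Complex.exp (2*π*m*d/M * Complex.I) =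
      if (M:ℤ) ∣ d then (M:ℂ) else 0 := by
  have hM' : (M:ℂ) ≠ 0 := Nat.cast_ne_zero.mpr hM.ne'
  have hz : ∀ m : ℕ, Complex.exp (2*π*m*d/M * Complex.I)
      = Complex.exp (2*π*d/M * Complex.I) ^ m := by
    intro m
    rw [← Complex.exp_nat_mul]
    ring_nf
  simp only [hz]
  set z : ℂ := Complex.exp (2*π*d/M * Complex.I) with hzdef
  by_cases hd : (M:ℤ) ∣ d
  · have hz1 : z = 1 := by
      obtain ⟨c, hc⟩ := hd
      rw [hzdef, hc]
      have : (2*π*((M:ℤ)*c : ℤ)/M : ℂ) * Complex.I = c * (2 * π * Complex.I) := by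
        push_cast
        field_simp
      rw [this, Complex.exp_int_mul_two_pi_mul_I]
    simp [hz1, hd]
  · have hz1 : z ≠ 1 := by
      rw [hzdef, Ne, Complex.exp_eq_one_iff]
      rintro ⟨n, hn⟩
      apply hd
      have hπ : (π:ℂ) ≠ 0 := by exact_mod_cast Real.pi_ne_zero
      have : (d : ℂ) = (n : ℂ) * M := by
        have hI := Complex.I_ne_zero
        field_simp at hn
        have h2 : (2*π*Complex.I) * d = (2*π*Complex.I) * ((n:ℂ)*M) := by
          linear_combination (2*π*Complex.I) * hn
        exact mul_left_cancel₀ (by simp [hπ, hI]) h2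
      have hd2 : d = n * M := by exact_mod_cast this
      exact ⟨n, by linarith⟩
    have hzM : z ^ M = 1 := by
      rw [hzdef, ← Complex.exp_nat_mul]
      have : (M:ℂ) * (2*π*d/M * Complex.I) = d * (2*π*Complex.I) := by
        field_simp
      rw [this, Complex.exp_int_mul_two_pi_mul_I]
    rw [geom_sum_eq hz1, hzM]
    simp [hd]

lemma sum_cos (M : ℕ) (hM : 0 < M) (d : ℤ) :
    ∑ m ∈ Finset.range M, Real.cos (2*π*m*d/M) =
      if (M:ℤ) ∣ d then (M:ℝ) else 0 := by
  have := congrArg Complex.re (sum_exp M hM d)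
  rw [Complex.re_sum] at this
  convert this using 2 with m hm
  · have : ((2*π*m*d/M : ℝ) : ℂ) = (2*π*m*d/M : ℂ) := by push_cast; ring
    rw [← Complex.exp_ofReal_mul_I_re, this]
  · split <;> simp

lemma sum_sin (M : ℕ) (hM : 0 < M) (d : ℤ) :
    ∑ m ∈ Finset.range M, Real.sin (2*π*m*d/M) = 0 := by
  have := congrArg Complex.im (sum_exp M hM d)
  rw [Complex.im_sum] at this
  rw [show (0:ℝ) = (if (M:ℤ) ∣ d then (M:ℂ) else 0).im by split <;> simp, ← this]
  congr 1 with m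
  have h : ((2*π*m*d/M : ℝ) : ℂ) = (2*π*m*d/M : ℂ) := by push_cast; ring
  rw [← Complex.exp_ofReal_mul_I_im, h]

lemma eI_mul (a b : ℝ) : eI a * eI b = eI (a+b) := by
  ext <;> simp only [Quaternion.re_mul, Quaternion.imI_mul, Quaternion.imJ_mul, Quaternion.imK_mul] <;> simp [eI, Real.cos_add, Real.sin_add] <;> ring

lemma eJ_mul (a b : ℝ) : eJ a * eJ b = eJ (a+b) := by
  ext <;> simp only [Quaternion.re_mul, Quaternion.imI_mul, Quaternion.imJ_mul, Quaternion.imK_mul] <;> simp [eJ, Real.cos_add, Real.sin_add] <;> ring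

lemma star_eI (a : ℝ) : star (eI a) = eI (-a) := by
  ext <;> simp only [Quaternion.re_star, Quaternion.imI_star, Quaternion.imJ_star, Quaternion.imK_star] <;> simp [eI]

lemma star_eJ (a : ℝ) : star (eJ a) = eJ (-a) := by
  ext <;> simp only [Quaternion.re_star, Quaternion.imI_star, Quaternion.imJ_star, Quaternion.imK_star] <;> simp [eJ]

lemma eIJI (a b c : ℝ) : eI a * eJ b * eI c =
    ⟨Real.cos b * Real.cos (a+c), Real.cos b * Real.sin (a+c),
     Real.sin b * Real.cos (a-c), Real.sin b * Real.sin (a-c)⟩ := by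
  ext <;> simp only [Quaternion.re_mul, Quaternion.imI_mul, Quaternion.imJ_mul, Quaternion.imK_mul] <;> simp [eI, eJ, Real.cos_add, Real.sin_add, Real.cos_sub, Real.sin_sub] <;> ring

lemma key_msum (M : ℕ) (hM : 0 < M) (a b c : ℤ) :
    ∑ m ∈ msq M, eI (2*π*m.1*a/M) * eJ (2*π*m.2*b/M) * eI (-(2*π*m.1*c/M)) =
      if ((M:ℤ) ∣ a - c ∧ (M:ℤ) ∣ b) then (((M:ℝ)^2 : ℝ) : ℍ) else 0 := by
  have key : ∀ m : ℕ × ℕ, eI (2*π*m.1*a/M) * eJ (2*π*m.2*b/M) * eI (-(2*π*m.1*c/M)) =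
      ⟨Real.cos (2*π*m.2*b/M) * Real.cos (2*π*m.1*(a-c)/M),
       Real.cos (2*π*m.2*b/M) * Real.sin (2*π*m.1*(a-c)/M),
       Real.sin (2*π*m.2*b/M) * Real.cos (2*π*m.1*(a+c)/M),
       Real.sin (2*π*m.2*b/M) * Real.sin (2*π*m.1*(a+c)/M)⟩ := by
    intro m
    rw [eIJI]
    have h1 : 2*π*m.1*a/M + -(2*π*m.1*c/M) = 2*π*m.1*((a:ℝ)-c)/M := by ring
    have h2 : 2*π*m.1*a/M - -(2*π*m.1*c/M) = 2*π*m.1*((a:ℝ)+c)/M := by ring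
    rw [h1, h2]
  simp only [key]
  have hre : ∀ q : ℕ × ℕ → ℍ, ∀ s : Finset (ℕ × ℕ), (∑ x ∈ s, q x).re = ∑ x ∈ s, (q x).re :=
    fun q s => map_sum (QuaternionAlgebra.reₗ (-1:ℝ) (0:ℝ) (-1:ℝ)) q s
  have himI : ∀ q : ℕ × ℕ → ℍ, ∀ s : Finset (ℕ × ℕ), (∑ x ∈ s, q x).imI = ∑ x ∈ s, (q x).imI :=
    fun q s => map_sum (QuaternionAlgebra.imIₗ (-1:ℝ) (0:ℝ) (-1:ℝ)) q s
  have himJ : ∀ q : ℕ × ℕ → ℍ, ∀ s : Finset (ℕ × ℕ), (∑ x ∈ s, q x).imJ = ∑ x ∈ s, (q x).imJ :=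
    fun q s => map_sum (QuaternionAlgebra.imJₗ (-1:ℝ) (0:ℝ) (-1:ℝ)) q s
  have himK : ∀ q : ℕ × ℕ → ℍ, ∀ s : Finset (ℕ × ℕ), (∑ x ∈ s, q x).imK = ∑ x ∈ s, (q x).imK :=
    fun q s => map_sum (QuaternionAlgebra.imKₗ (-1:ℝ) (0:ℝ) (-1:ℝ)) q s
  have hc1 : ∑ m₁ ∈ Finset.range M, Real.cos (2*π*m₁*((a:ℝ)-c)/M) =
      if (M:ℤ) ∣ a - c then (M:ℝ) else 0 := by
    rw [← sum_cos M hM (a-c)]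
    refine Finset.sum_congr rfl fun m _ => ?_
    congr 1; push_cast; ring
  have hs1 : ∑ m₁ ∈ Finset.range M, Real.sin (2*π*m₁*((a:ℝ)-c)/M) = 0 := by
    rw [← sum_sin M hM (a-c)]
    refine Finset.sum_congr rfl fun m _ => ?_
    congr 1; push_cast; ring
  have hc2 : ∑ m₂ ∈ Finset.range M, Real.cos (2*π*m₂*(b:ℝ)/M) =
      if (M:ℤ) ∣ b then (M:ℝ) else 0 := sum_cos M hM b
  have hs2 : ∑ m₂ ∈ Finset.range M, Real.sin (2*π*m₂*(b:ℝ)/M) = 0 := sum_sin M hM b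
  ext
  · erw [hre]
    dsimp only
    rw [Finset.sum_product, Finset.sum_comm]
    dsimp only
    rw [← Finset.sum_mul_sum, hc1, hc2]
    by_cases h1 : (M:ℤ) ∣ a - c <;> by_cases h2 : (M:ℤ) ∣ b <;>
      simp [h1, h2, ← Quaternion.coe_pow, Quaternion.re_zero] <;> ring
  · erw [himI]
    dsimp only
    rw [Finset.sum_product, Finset.sum_comm]
    dsimp only
    rw [← Finset.sum_mul_sum, hs1, hc2]
    by_cases h1 : (M:ℤ) ∣ a - c <;> by_cases h2 : (M:ℤ) ∣ b <;> simp [h1, h2, ← Quaternion.coe_pow, Quaternion.imI_zero]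
  · erw [himJ]
    dsimp only
    rw [Finset.sum_product, Finset.sum_comm]
    dsimp only
    rw [← Finset.sum_mul_sum, hs2]
    by_cases h1 : (M:ℤ) ∣ a - c <;> by_cases h2 : (M:ℤ) ∣ b <;> simp [h1, h2, ← Quaternion.coe_pow, Quaternion.imJ_zero]
  · erw [himK]
    dsimp only
    rw [Finset.sum_product, Finset.sum_comm]
    dsimp only
    rw [← Finset.sum_mul_sum, hs2]
    by_cases h1 : (M:ℤ) ∣ a - c <;> by_cases h2 : (M:ℤ) ∣ b <;> simp [h1, h2, ← Quaternion.coe_pow, Quaternion.imK_zero]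

/-- The pure quaternion-algebra reordering of one summand. -/
lemma reorder (x y : ℍ) (r s : ℝ) (a₁ b₁ a₂ b₂ : ℝ) :
    (x * (eI a₁ * (r:ℍ) * eJ b₁)) * (star (eI a₂ * (s:ℍ) * eJ b₂) * y)
      = (r*s) • (x * (eI a₁ * eJ (b₁ - b₂) * eI (-a₂)) * y) := by
  rw [star_mul, star_mul, Quaternion.star_coe, star_eI, star_eJ]
  have hJ : eJ b₁ * eJ (-b₂) = eJ (b₁ - b₂) := by rw [eJ_mul]; ring_nf
  simp only [Quaternion.mul_coe_eq_smul, Quaternion.coe_mul_eq_smul, smul_mul_assoc,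
    mul_smul_comm, smul_smul]
  rw [mul_comm s r]
  congr 1
  rw [← hJ]
  noncomm_ring

end Stmt16Aux
namespace Stmt16Aux
open scoped Real

lemma summable_shift {w : ℤ × ℤ → ℍ} (hw : MemL2 w) (N : ℕ) (hN : 0 < N) (k : ℤ × ℤ) :
    Summable (fun n : ℤ × ℤ => ‖w (k.1 - n.1 * (N:ℤ), k.2 - n.2 * (N:ℤ))‖ ^ 2) := by
  have hinj : Function.Injective (fun n : ℤ × ℤ => (k.1 - n.1 * (N:ℤ), k.2 - n.2 * (N:ℤ))) := by
    intro n n' hnn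
    have hN' : (N:ℤ) ≠ 0 := by exact_mod_cast hN.ne'
    obtain ⟨h1, h2⟩ := Prod.ext_iff.mp hnn
    simp only at h1 h2
    have e1 : n.1 * (N:ℤ) = n'.1 * (N:ℤ) := by omega
    have e2 : n.2 * (N:ℤ) = n'.2 * (N:ℤ) := by omega
    exact Prod.ext (mul_right_cancel₀ hN' e1) (mul_right_cancel₀ hN' e2)
  exact hw.comp_injective hinj

lemma abs_re_le_norm (q : ℍ) : |q.re| ≤ ‖q‖ := by
  have h : q.re^2 ≤ ‖q‖^2 := by
    rw [sq ‖q‖, ← Quaternion.normSq_eq_norm_mul_self, Quaternion.normSq_def']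
    nlinarith [sq_nonneg q.imI, sq_nonneg q.imJ, sq_nonneg q.imK]
  calc |q.re| = Real.sqrt (q.re^2) := (Real.sqrt_sq_eq_abs _).symm
  _ ≤ Real.sqrt (‖q‖^2) := Real.sqrt_le_sqrt h
  _ = ‖q‖ := Real.sqrt_sq (norm_nonneg q)

lemma summable_W {u v : ℤ × ℤ → ℍ} (hu : MemL2 u) (hv : MemL2 v) (N : ℕ) (hN : 0 < N)
    (k k' : ℤ × ℤ) :
    Summable (fun n : ℤ × ℤ =>
      (u (k.1 - n.1 * (N:ℤ), k.2 - n.2 * (N:ℤ))).re *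
        (v (k'.1 - n.1 * (N:ℤ), k'.2 - n.2 * (N:ℤ))).re) := by
  have h1 := summable_shift hu N hN k
  have h2 := summable_shift hv N hN k'
  have hb : Summable (fun n : ℤ × ℤ =>
      ‖u (k.1 - n.1 * (N:ℤ), k.2 - n.2 * (N:ℤ))‖ * ‖v (k'.1 - n.1 * (N:ℤ), k'.2 - n.2 * (N:ℤ))‖) := by
    refine Summable.of_nonneg_of_le (fun n => by positivity) (fun n => ?_) (h1.add h2)
    nlinarith [norm_nonneg (u (k.1 - n.1 * (N:ℤ), k.2 - n.2 * (N:ℤ))),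
      norm_nonneg (v (k'.1 - n.1 * (N:ℤ), k'.2 - n.2 * (N:ℤ))),
      sq_nonneg (‖u (k.1 - n.1 * (N:ℤ), k.2 - n.2 * (N:ℤ))‖ -
        ‖v (k'.1 - n.1 * (N:ℤ), k'.2 - n.2 * (N:ℤ))‖)]
  refine Summable.of_norm_bounded hb (fun n => ?_)
  rw [Real.norm_eq_abs, abs_mul]
  gcongr <;> exact abs_re_le_norm _

end Stmt16Aux
namespace Stmt16Aux
open scoped Real

lemma msum_eval (M N : ℕ) (hM : 0 < M) {u v : ℤ × ℤ → ℍ}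
    (hur : IsRealValued u) (hvr : IsRealValued v)
    (f φ : ℤ × ℤ → ℍ) (k k' n : ℤ × ℤ) :
    ∑ m ∈ msq M,
        (star (f k) * gaborAtom M N u m n k) * (star (gaborAtom M N v m n k') * φ k') =
      if ((M:ℤ) ∣ k.1 - k'.1 ∧ (M:ℤ) ∣ k.2 - k'.2) then
        ((u (k.1 - n.1*(N:ℤ), k.2 - n.2*(N:ℤ))).re *
          (v (k'.1 - n.1*(N:ℤ), k'.2 - n.2*(N:ℤ))).re * (M:ℝ)^2) • (star (f k) * φ k')
      else 0 := by
  have hterm : ∀ m ∈ msq M,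
      (star (f k) * gaborAtom M N u m n k) * (star (gaborAtom M N v m n k') * φ k')
        = ((u (k.1 - n.1*(N:ℤ), k.2 - n.2*(N:ℤ))).re *
            (v (k'.1 - n.1*(N:ℤ), k'.2 - n.2*(N:ℤ))).re) •
          (star (f k) *
            (eI (2*π*m.1*k.1/M) * eJ (2*π*m.2*((k.2 - k'.2 : ℤ):ℝ)/M) *
              eI (-(2*π*m.1*k'.1/M))) * φ k') := by
    intro m _
    unfold gaborAtom
    rw [hur (k.1 - n.1*(N:ℤ), k.2 - n.2*(N:ℤ)), hvr (k'.1 - n.1*(N:ℤ), k'.2 - n.2*(N:ℤ))]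
    rw [reorder]
    have harg : 2*π*m.2*(k.2:ℝ)/M - 2*π*m.2*(k'.2:ℝ)/M = 2*π*m.2*((k.2 - k'.2 : ℤ):ℝ)/M := by
      push_cast; ring
    rw [harg]
    simp [Quaternion.re_coe]
  rw [Finset.sum_congr rfl hterm, ← Finset.smul_sum, ← Finset.sum_mul, ← Finset.mul_sum,
    key_msum M hM k.1 (k.2 - k'.2) k'.1]
  by_cases hcond : ((M:ℤ) ∣ k.1 - k'.1 ∧ (M:ℤ) ∣ k.2 - k'.2)
  · rw [if_pos hcond, if_pos hcond]
    rw [Quaternion.mul_coe_eq_smul, smul_mul_assoc, smul_smul]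
  · rw [if_neg hcond, if_neg hcond]
    simp

lemma scalar_form (a : ℝ) (Mn : ℕ) (x y : ℍ) :
    ((a * (Mn:ℝ)^2) : ℝ) • (x * y) = (Mn:ℍ)^2 * ((a:ℍ) * x * y) := by
  have hM : (Mn:ℍ) = ((Mn:ℝ):ℍ) := by
    rw [Quaternion.coe_natCast]
  rw [hM]
  simp only [← Quaternion.coe_pow, Quaternion.coe_mul_eq_smul, smul_mul_assoc, smul_smul,
    mul_assoc]
  rw [mul_comm]

lemma keyL (M N : ℕ) (hM : 0 < M) (hN : 0 < N) (u v f φ : ℤ × ℤ → ℍ)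
    (hu : MemL2 u) (hv : MemL2 v) (hur : IsRealValued u) (hvr : IsRealValued v)
    (S T D : Finset (ℤ × ℤ))
    (hS : ∀ k ∉ S, f k = 0) (hT : ∀ k ∉ T, φ k = 0)
    (hD : ∀ k ∈ S, ∀ k' ∈ T, (M:ℤ) ∣ k'.1 - k.1 → (M:ℤ) ∣ k'.2 - k.2 →
      ((k'.1 - k.1)/(M:ℤ), (k'.2 - k.2)/(M:ℤ)) ∈ D) :
    ∑' n : ℤ × ℤ, ∑ m ∈ msq M, qpair f (gaborAtom M N u m n) * qpair (gaborAtom M N v m n) φ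
      = ∑ k ∈ S, ∑ p ∈ D, (M:ℍ)^2 *
          ((∑' n : ℤ × ℤ, u (k.1 - n.1*(N:ℤ), k.2 - n.2*(N:ℤ)) *
              v (k.1 + p.1*(M:ℤ) - n.1*(N:ℤ), k.2 + p.2*(M:ℤ) - n.2*(N:ℤ))) *
            star (f k) * φ (k.1 + p.1*(M:ℤ), k.2 + p.2*(M:ℤ))) := by
  classical
  have hM' : (M:ℤ) ≠ 0 := by exact_mod_cast hM.ne'
  -- the real-valued correlation
  let W : ℤ × ℤ → ℤ × ℤ → ℝ := fun k k' => ∑' n : ℤ × ℤ,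
    (u (k.1 - n.1*(N:ℤ), k.2 - n.2*(N:ℤ))).re * (v (k'.1 - n.1*(N:ℤ), k'.2 - n.2*(N:ℤ))).re
  have hWs : ∀ k k' : ℤ × ℤ, Summable (fun n : ℤ × ℤ =>
      (u (k.1 - n.1*(N:ℤ), k.2 - n.2*(N:ℤ))).re * (v (k'.1 - n.1*(N:ℤ), k'.2 - n.2*(N:ℤ))).re) :=
    fun k k' => summable_W hu hv N hN k k'
  have hWq : ∀ k k' : ℤ × ℤ, ((W k k' : ℝ) : ℍ) = ∑' n : ℤ × ℤ,
      u (k.1 - n.1*(N:ℤ), k.2 - n.2*(N:ℤ)) * v (k'.1 - n.1*(N:ℤ), k'.2 - n.2*(N:ℤ)) := by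
    intro k k'
    have hcont : Continuous (⇑(algebraMap ℝ ℍ).toAddMonoidHom) := Quaternion.continuous_coe
    have hmap := ((hWs k k').hasSum.map (algebraMap ℝ ℍ).toAddMonoidHom hcont).tsum_eq
    exact hmap.symm.trans (tsum_congr fun n => by
      conv_rhs => rw [hur (k.1 - n.1*(N:ℤ), k.2 - n.2*(N:ℤ)),
        hvr (k'.1 - n.1*(N:ℤ), k'.2 - n.2*(N:ℤ)), ← Quaternion.coe_mul]
      rfl)
  let Val : ℤ × ℤ → ℤ × ℤ → ℍ := fun k k' => ((W k k' * (M:ℝ)^2) : ℝ) • (star (f k) * φ k')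
  -- summability of each (k, k') piece
  have hFs : ∀ k k' : ℤ × ℤ, Summable (fun n : ℤ × ℤ =>
      if ((M:ℤ) ∣ k.1 - k'.1 ∧ (M:ℤ) ∣ k.2 - k'.2) then
        ((u (k.1 - n.1*(N:ℤ), k.2 - n.2*(N:ℤ))).re *
          (v (k'.1 - n.1*(N:ℤ), k'.2 - n.2*(N:ℤ))).re * (M:ℝ)^2) • (star (f k) * φ k')
      else 0) := by
    intro k k'
    by_cases hcond : ((M:ℤ) ∣ k.1 - k'.1 ∧ (M:ℤ) ∣ k.2 - k'.2)
    · simp only [if_pos hcond]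
      exact (((hWs k k').mul_right ((M:ℝ)^2)).smul_const _)
    · simp only [if_neg hcond]
      exact summable_zero
  calc ∑' n : ℤ × ℤ, ∑ m ∈ msq M,
        qpair f (gaborAtom M N u m n) * qpair (gaborAtom M N v m n) φ
      = ∑' n : ℤ × ℤ, ∑ k ∈ S, ∑ k' ∈ T,
          (if ((M:ℤ) ∣ k.1 - k'.1 ∧ (M:ℤ) ∣ k.2 - k'.2) then
            ((u (k.1 - n.1*(N:ℤ), k.2 - n.2*(N:ℤ))).re *
              (v (k'.1 - n.1*(N:ℤ), k'.2 - n.2*(N:ℤ))).re * (M:ℝ)^2) • (star (f k) * φ k')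
          else 0) := by
        refine tsum_congr fun n => ?_
        have hq1 : ∀ m : ℕ × ℕ, qpair f (gaborAtom M N u m n)
            = ∑ k ∈ S, star (f k) * gaborAtom M N u m n k :=
          fun m => tsum_eq_sum (fun k hk => by rw [hS k hk, star_zero, zero_mul])
        have hq2 : ∀ m : ℕ × ℕ, qpair (gaborAtom M N v m n) φ
            = ∑ k' ∈ T, star (gaborAtom M N v m n k') * φ k' :=
          fun m => tsum_eq_sum (fun k hk => by rw [hT k hk, mul_zero])
        calc ∑ m ∈ msq M, qpair f (gaborAtom M N u m n) * qpair (gaborAtom M N v m n) φ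
            = ∑ m ∈ msq M, ∑ k ∈ S, ∑ k' ∈ T,
                (star (f k) * gaborAtom M N u m n k) *
                  (star (gaborAtom M N v m n k') * φ k') := by
              refine Finset.sum_congr rfl fun m _ => ?_
              rw [hq1 m, hq2 m, Finset.sum_mul_sum]
          _ = ∑ k ∈ S, ∑ k' ∈ T, ∑ m ∈ msq M,
                (star (f k) * gaborAtom M N u m n k) *
                  (star (gaborAtom M N v m n k') * φ k') := by
              rw [Finset.sum_comm]
              exact Finset.sum_congr rfl fun k _ => Finset.sum_comm
          _ = _ := Finset.sum_congr rfl fun k _ => Finset.sum_congr rfl fun k' _ =>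
                msum_eval M N hM hur hvr f φ k k' n
    _ = ∑ k ∈ S, ∑ k' ∈ T,
          (if ((M:ℤ) ∣ k.1 - k'.1 ∧ (M:ℤ) ∣ k.2 - k'.2) then Val k k' else 0) := by
        rw [Summable.tsum_finsetSum (fun k _ => summable_sum fun k' _ => hFs k k')]
        refine Finset.sum_congr rfl fun k _ => ?_
        rw [Summable.tsum_finsetSum (fun k' _ => hFs k k')]
        refine Finset.sum_congr rfl fun k' _ => ?_
        by_cases hcond : ((M:ℤ) ∣ k.1 - k'.1 ∧ (M:ℤ) ∣ k.2 - k'.2)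
        · simp only [if_pos hcond]
          rw [Summable.tsum_smul_const ((hWs k k').mul_right ((M:ℝ)^2)), tsum_mul_right]
        · simp only [if_neg hcond, tsum_zero]
    _ = ∑ k ∈ S, ∑ p ∈ D, Val k (k.1 + p.1*(M:ℤ), k.2 + p.2*(M:ℤ)) := by
        refine Finset.sum_congr rfl fun k hk => ?_
        rw [← Finset.sum_filter]
        rw [show ∑ p ∈ D, Val k (k.1 + p.1*(M:ℤ), k.2 + p.2*(M:ℤ))
            = ∑ p ∈ D.filter (fun p => (k.1 + p.1*(M:ℤ), k.2 + p.2*(M:ℤ)) ∈ T),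
                Val k (k.1 + p.1*(M:ℤ), k.2 + p.2*(M:ℤ)) from
          (Finset.sum_subset (Finset.filter_subset _ _) (fun p hp hnp => by
            have hout : (k.1 + p.1*(M:ℤ), k.2 + p.2*(M:ℤ)) ∉ T := by
              intro hin
              exact hnp (Finset.mem_filter.mpr ⟨hp, hin⟩)
            show ((W k _ * (M:ℝ)^2) : ℝ) • (star (f k) * φ _) = 0
            rw [hT _ hout, mul_zero, smul_zero])).symm]
        refine Finset.sum_nbij'
          (i := fun k' => ((k'.1 - k.1)/(M:ℤ), (k'.2 - k.2)/(M:ℤ)))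
          (j := fun p => (k.1 + p.1*(M:ℤ), k.2 + p.2*(M:ℤ))) ?_ ?_ ?_ ?_ ?_
        · intro k' hk'
          obtain ⟨hkT, hd1, hd2⟩ := Finset.mem_filter.mp hk'
          have hd1' : (M:ℤ) ∣ k'.1 - k.1 := (dvd_sub_comm).mp hd1
          have hd2' : (M:ℤ) ∣ k'.2 - k.2 := (dvd_sub_comm).mp hd2
          refine Finset.mem_filter.mpr ⟨hD k hk k' hkT hd1' hd2', ?_⟩
          have e1 : k.1 + (k'.1 - k.1)/(M:ℤ)*(M:ℤ) = k'.1 := by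
            rw [Int.ediv_mul_cancel hd1']; ring
          have e2 : k.2 + (k'.2 - k.2)/(M:ℤ)*(M:ℤ) = k'.2 := by
            rw [Int.ediv_mul_cancel hd2']; ring
          simpa [e1, e2] using hkT
        · intro p hp
          obtain ⟨hpD, hpT⟩ := Finset.mem_filter.mp hp
          refine Finset.mem_filter.mpr ⟨hpT, ?_, ?_⟩
          · exact ⟨-p.1, by push_cast; ring⟩
          · exact ⟨-p.2, by push_cast; ring⟩
        · intro k' hk'
          obtain ⟨hkT, hd1, hd2⟩ := Finset.mem_filter.mp hk'
          have hd1' : (M:ℤ) ∣ k'.1 - k.1 := (dvd_sub_comm).mp hd1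
          have hd2' : (M:ℤ) ∣ k'.2 - k.2 := (dvd_sub_comm).mp hd2
          have e1 : k.1 + (k'.1 - k.1)/(M:ℤ)*(M:ℤ) = k'.1 := by
            rw [Int.ediv_mul_cancel hd1']; ring
          have e2 : k.2 + (k'.2 - k.2)/(M:ℤ)*(M:ℤ) = k'.2 := by
            rw [Int.ediv_mul_cancel hd2']; ring
          exact Prod.ext e1 e2
        · intro p hp
          have e1 : (k.1 + p.1*(M:ℤ) - k.1)/(M:ℤ) = p.1 := by
            rw [show k.1 + p.1*(M:ℤ) - k.1 = p.1*(M:ℤ) by ring, Int.mul_ediv_cancel _ hM']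
          have e2 : (k.2 + p.2*(M:ℤ) - k.2)/(M:ℤ) = p.2 := by
            rw [show k.2 + p.2*(M:ℤ) - k.2 = p.2*(M:ℤ) by ring, Int.mul_ediv_cancel _ hM']
          exact Prod.ext e1 e2
        · intro k' hk'
          obtain ⟨hkT, hd1, hd2⟩ := Finset.mem_filter.mp hk'
          have hd1' : (M:ℤ) ∣ k'.1 - k.1 := (dvd_sub_comm).mp hd1
          have hd2' : (M:ℤ) ∣ k'.2 - k.2 := (dvd_sub_comm).mp hd2
          have e1 : k.1 + (k'.1 - k.1)/(M:ℤ)*(M:ℤ) = k'.1 := by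
            rw [Int.ediv_mul_cancel hd1']; ring
          have e2 : k.2 + (k'.2 - k.2)/(M:ℤ)*(M:ℤ) = k'.2 := by
            rw [Int.ediv_mul_cancel hd2']; ring
          have : (k.1 + (k'.1 - k.1)/(M:ℤ)*(M:ℤ), k.2 + (k'.2 - k.2)/(M:ℤ)*(M:ℤ)) = k' :=
            Prod.ext e1 e2
          rw [this]
    _ = _ := by
        refine Finset.sum_congr rfl fun k _ => Finset.sum_congr rfl fun p _ => ?_
        rw [← hWq k (k.1 + p.1*(M:ℤ), k.2 + p.2*(M:ℤ))]
        exact scalar_form (W k (k.1 + p.1*(M:ℤ), k.2 + p.2*(M:ℤ))) M (star (f k))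
          (φ (k.1 + p.1*(M:ℤ), k.2 + p.2*(M:ℤ)))

end Stmt16Aux


/-- the fundamental identity for two Gabor systems with real-valued
windows, on finitely supported sequences. -/
theorem stmt_16 (L M N : ℕ) (hL : 0 < L) (hM : 0 < M) (hN : 0 < N)
    (g h : ℕ → ℤ × ℤ → ℍ)
    (hg : ∀ l < L, MemL2 (g l)) (hh : ∀ l < L, MemL2 (h l))
    (hgreal : ∀ l < L, IsRealValued (g l)) (hhreal : ∀ l < L, IsRealValued (h l)) :
    ∀ f φ : ℤ × ℤ → ℍ, (Function.support f).Finite → (Function.support φ).Finite →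
      (∑ l ∈ Finset.range L, ∑' n : ℤ × ℤ, ∑ m ∈ msq M,
        qpair f (gaborAtom M N (g l) m n) * qpair (gaborAtom M N (h l) m n) φ) =
      (M : ℍ) ^ 2 * ∑' k : ℤ × ℤ, ∑' p : ℤ × ℤ,
        gaborGmix L M N g h k p * star (f k) *
          φ (k.1 + p.1 * (M : ℤ), k.2 + p.2 * (M : ℤ)) := by
  intro f φ hf hφ
  classical
  have hM' : (M:ℤ) ≠ 0 := by exact_mod_cast hM.ne'
  set S : Finset (ℤ × ℤ) := hf.toFinset with hSdef
  set T : Finset (ℤ × ℤ) := hφ.toFinset with hTdef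
  set D : Finset (ℤ × ℤ) := Finset.image
    (fun q : (ℤ × ℤ) × (ℤ × ℤ) => ((q.1.1 - q.2.1)/(M:ℤ), (q.1.2 - q.2.2)/(M:ℤ)))
    (T ×ˢ S) with hDdef
  have hS : ∀ k ∉ S, f k = 0 := fun k hk =>
    Function.notMem_support.mp (fun hm => hk (hf.mem_toFinset.mpr hm))
  have hT : ∀ k ∉ T, φ k = 0 := fun k hk =>
    Function.notMem_support.mp (fun hm => hk (hφ.mem_toFinset.mpr hm))
  have hDmem : ∀ k ∈ S, ∀ k' ∈ T, (M:ℤ) ∣ k'.1 - k.1 → (M:ℤ) ∣ k'.2 - k.2 →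
      ((k'.1 - k.1)/(M:ℤ), (k'.2 - k.2)/(M:ℤ)) ∈ D :=
    fun k hk k' hk' _ _ =>
      Finset.mem_image.mpr ⟨(k', k), Finset.mem_product.mpr ⟨hk', hk⟩, rfl⟩
  -- reduce the double tsum on the RHS to finite sums
  have hredk : ∀ k ∉ S, (∑' p : ℤ × ℤ, gaborGmix L M N g h k p * star (f k) *
      φ (k.1 + p.1 * (M : ℤ), k.2 + p.2 * (M : ℤ))) = 0 := by
    intro k hk
    have hzero : ∀ p : ℤ × ℤ, gaborGmix L M N g h k p * star (f k) *
        φ (k.1 + p.1 * (M : ℤ), k.2 + p.2 * (M : ℤ)) = 0 := fun p => by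
      rw [hS k hk, star_zero, mul_zero, zero_mul]
    simp only [hzero, tsum_zero]
  have hredp : ∀ k ∈ S, ∀ p ∉ D, gaborGmix L M N g h k p * star (f k) *
      φ (k.1 + p.1 * (M : ℤ), k.2 + p.2 * (M : ℤ)) = 0 := by
    intro k hk p hp
    by_cases hφ0 : φ (k.1 + p.1 * (M : ℤ), k.2 + p.2 * (M : ℤ)) = 0
    · rw [hφ0, mul_zero]
    · exfalso
      apply hp
      have hmemT : ((k.1 + p.1 * (M : ℤ), k.2 + p.2 * (M : ℤ)) : ℤ × ℤ) ∈ T :=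
        hφ.mem_toFinset.mpr hφ0
      refine Finset.mem_image.mpr ⟨((k.1 + p.1 * (M : ℤ), k.2 + p.2 * (M : ℤ)), k),
        Finset.mem_product.mpr ⟨hmemT, hk⟩, ?_⟩
      refine Prod.ext ?_ ?_
      · show (k.1 + p.1 * (M : ℤ) - k.1)/(M:ℤ) = p.1
        rw [show k.1 + p.1 * (M : ℤ) - k.1 = p.1 * (M:ℤ) by ring, Int.mul_ediv_cancel _ hM']
      · show (k.2 + p.2 * (M : ℤ) - k.2)/(M:ℤ) = p.2
        rw [show k.2 + p.2 * (M : ℤ) - k.2 = p.2 * (M:ℤ) by ring, Int.mul_ediv_cancel _ hM']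
  rw [tsum_eq_sum hredk, Finset.sum_congr rfl (fun k hk => tsum_eq_sum (hredp k hk))]
  -- expand gaborGmix and push everything inside
  calc ∑ l ∈ Finset.range L, ∑' n : ℤ × ℤ, ∑ m ∈ msq M,
        qpair f (gaborAtom M N (g l) m n) * qpair (gaborAtom M N (h l) m n) φ
      = ∑ l ∈ Finset.range L, ∑ k ∈ S, ∑ p ∈ D, (M:ℍ)^2 *
          ((∑' n : ℤ × ℤ, g l (k.1 - n.1*(N:ℤ), k.2 - n.2*(N:ℤ)) *
              h l (k.1 + p.1*(M:ℤ) - n.1*(N:ℤ), k.2 + p.2*(M:ℤ) - n.2*(N:ℤ))) *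
            star (f k) * φ (k.1 + p.1*(M:ℤ), k.2 + p.2*(M:ℤ))) := by
        refine Finset.sum_congr rfl fun l hl => ?_
        have hlL : l < L := Finset.mem_range.mp hl
        exact Stmt16Aux.keyL M N hM hN (g l) (h l) f φ (hg l hlL) (hh l hlL)
          (hgreal l hlL) (hhreal l hlL) S T D hS hT hDmem
    _ = ∑ k ∈ S, ∑ p ∈ D, ∑ l ∈ Finset.range L, (M:ℍ)^2 *
          ((∑' n : ℤ × ℤ, g l (k.1 - n.1*(N:ℤ), k.2 - n.2*(N:ℤ)) *
              h l (k.1 + p.1*(M:ℤ) - n.1*(N:ℤ), k.2 + p.2*(M:ℤ) - n.2*(N:ℤ))) *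
            star (f k) * φ (k.1 + p.1*(M:ℤ), k.2 + p.2*(M:ℤ))) := by
        rw [Finset.sum_comm]
        exact Finset.sum_congr rfl fun k _ => Finset.sum_comm
    _ = (M : ℍ) ^ 2 * ∑ k ∈ S, ∑ p ∈ D,
          gaborGmix L M N g h k p * star (f k) *
            φ (k.1 + p.1 * (M : ℤ), k.2 + p.2 * (M : ℤ)) := by
        rw [Finset.mul_sum]
        refine Finset.sum_congr rfl fun k _ => ?_
        rw [Finset.mul_sum]
        refine Finset.sum_congr rfl fun p _ => ?_
        unfold gaborGmix
        rw [Finset.sum_mul, Finset.sum_mul, Finset.mul_sum]
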